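/- Let n, χ ∈ ℕ, let a, Δx ∈ ℝ, set x_κ = a + κ·Δx for κ ∈ {0, …, 2ⁿ−1}, and let α₀, …, α_χ ∈ ℂ. Define the vector ψ ∈ ℂ^{2ⁿ} by ψ_κ = ∑_{q=0}^{χ} α_q · x_κ^q. Then for every index i ∈ {0, …, 2ⁿ−1} whose Hamming weight satisfies |i|_b > χ, the Walsh–Hadamard coefficient β_i = 2^{−n/2} · ∑_{κ=0}^{2ⁿ−1} ψ_κ · (−1)^{∑_{m=0}^{n−1} κ_m i_m} is zero. Equivalently, the vector H^{⊗n} ψ is supported only on computational basis indices of Hamming weight at most χ. -/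

import Mathlib

open Finset Polynomial

private lemma degree_taylor_eq (p : Polynomial ℂ) (r : ℂ) :
    (Polynomial.taylor r p).degree = p.degree := by
  rcases eq_or_ne p 0 with rfl | hp
  · simp
  · have h1 : Polynomial.taylor r p ≠ 0 := fun h => hp (taylor_injective r (by simp [h]))
    rw [degree_eq_natDegree h1, degree_eq_natDegree hp, natDegree_taylor]

private lemma leadingCoeff_taylor_eq (p : Polynomial ℂ) (r : ℂ) :
    (Polynomial.taylor r p).leadingCoeff = p.leadingCoeff := by
  rw [taylor_apply, leadingCoeff_comp (by simp)]
  simp [leadingCoeff_X_add_C]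

private lemma key_lemma : ∀ (n : ℕ) (p : Polynomial ℂ) (i : ℕ),
    p.degree < ((∑ m ∈ Finset.range n, if Nat.testBit i m then 1 else 0 : ℕ) : WithBot ℕ) →
    ∑ κ ∈ Finset.range (2 ^ n), p.eval (κ : ℂ) *
      (-1 : ℂ) ^ (∑ m ∈ Finset.range n,
        if Nat.testBit κ m ∧ Nat.testBit i m then 1 else 0) = 0 := by
  intro n
  induction n with
  | zero =>
    intro p i h
    simp only [Finset.range_zero, Finset.sum_empty, Nat.cast_zero] at h
    have hp : p = 0 := degree_eq_bot.mp (Nat.WithBot.lt_zero_iff.mp h)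
    simp [hp]
  | succ n IH =>
    intro p i h
    set W : ℕ := ∑ m ∈ Finset.range n, if Nat.testBit i m then 1 else 0 with hW
    have hsplit : ∑ m ∈ Finset.range (n+1), (if Nat.testBit i m then 1 else 0)
        = W + (if Nat.testBit i n then 1 else 0) := by
      rw [Finset.sum_range_succ]
    rw [hsplit] at h
    -- split the sum
    have h2 : (2:ℕ) ^ (n+1) = 2 ^ n + 2 ^ n := by ring
    rw [h2, Finset.sum_range_add]
    -- facts about bits
    have hsign_low : ∀ κ ∈ Finset.range (2 ^ n),
        (∑ m ∈ Finset.range (n+1), if Nat.testBit κ m ∧ Nat.testBit i m then 1 else 0)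
        = ∑ m ∈ Finset.range n, if Nat.testBit κ m ∧ Nat.testBit i m then 1 else 0 := by
      intro κ hκ
      rw [Finset.sum_range_succ, Nat.testBit_eq_false_of_lt (Finset.mem_range.mp hκ)]
      simp
    have hsign_high : ∀ κ ∈ Finset.range (2 ^ n),
        (∑ m ∈ Finset.range (n+1), if Nat.testBit (2 ^ n + κ) m ∧ Nat.testBit i m then 1 else 0)
        = (∑ m ∈ Finset.range n, if Nat.testBit κ m ∧ Nat.testBit i m then 1 else 0)
          + (if Nat.testBit i n then 1 else 0) := by
      intro κ hκ
      rw [Finset.sum_range_succ]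
      congr 1
      · apply Finset.sum_congr rfl
        intro m hm
        rw [Nat.testBit_two_pow_add_gt (Finset.mem_range.mp hm)]
      · rw [Nat.testBit_two_pow_add_eq, Nat.testBit_eq_false_of_lt (Finset.mem_range.mp hκ)]
        simp
    set c : ℂ := ((2:ℕ) ^ n : ℂ) with hc
    have heval_high : ∀ κ : ℕ, p.eval (((2 ^ n + κ : ℕ) : ℂ))
        = (Polynomial.taylor c p).eval (κ : ℂ) := by
      intro κ
      rw [taylor_eval]
      push_cast
      ring_nf
      simp [hc]
    by_cases hb : Nat.testBit i n
    · -- top bit of i is one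
      rw [if_pos hb] at h
      set q : Polynomial ℂ := p - Polynomial.taylor c p with hq
      have hqd : q.degree < (W : WithBot ℕ) := by
        rcases eq_or_ne p 0 with rfl | hp
        · simpa [hq] using (Nat.cast_withBot W ▸ WithBot.bot_lt_coe W :
            (⊥ : WithBot ℕ) < (W : WithBot ℕ))
        · have h1 : q.degree < p.degree :=
            degree_sub_lt (degree_taylor_eq p c).symm hp (leadingCoeff_taylor_eq p c).symm
          have h2 : p.degree ≤ (W : WithBot ℕ) := by
            rw [degree_eq_natDegree hp] at h ⊢
            exact_mod_cast Nat.lt_succ_iff.mp (by exact_mod_cast h)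
          exact lt_of_lt_of_le h1 h2
      have := IH q i hqd
      calc (∑ κ ∈ Finset.range (2 ^ n), p.eval (κ : ℂ) *
              (-1:ℂ) ^ (∑ m ∈ Finset.range (n+1),
                if Nat.testBit κ m ∧ Nat.testBit i m then 1 else 0))
            + ∑ κ ∈ Finset.range (2 ^ n), p.eval ((2 ^ n + κ : ℕ) : ℂ) *
              (-1:ℂ) ^ (∑ m ∈ Finset.range (n+1),
                if Nat.testBit (2 ^ n + κ) m ∧ Nat.testBit i m then 1 else 0)
          = ∑ κ ∈ Finset.range (2 ^ n), q.eval (κ : ℂ) *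
              (-1:ℂ) ^ (∑ m ∈ Finset.range n,
                if Nat.testBit κ m ∧ Nat.testBit i m then 1 else 0) := by
            rw [← Finset.sum_add_distrib]
            apply Finset.sum_congr rfl
            intro κ hκ
            simp only [hsign_low κ hκ, hsign_high κ hκ, heval_high κ, hq, if_pos hb,
              eval_sub, pow_add]
            ring
        _ = 0 := this
    · -- top bit of i is zero
      rw [if_neg hb, add_zero] at h
      set q : Polynomial ℂ := p + Polynomial.taylor c p with hq
      have hqd : q.degree < (W : WithBot ℕ) := by
        apply lt_of_le_of_lt (degree_add_le _ _)
        rw [degree_taylor_eq p c]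
        simpa using h
      have := IH q i hqd
      calc (∑ κ ∈ Finset.range (2 ^ n), p.eval (κ : ℂ) *
              (-1:ℂ) ^ (∑ m ∈ Finset.range (n+1),
                if Nat.testBit κ m ∧ Nat.testBit i m then 1 else 0))
            + ∑ κ ∈ Finset.range (2 ^ n), p.eval ((2 ^ n + κ : ℕ) : ℂ) *
              (-1:ℂ) ^ (∑ m ∈ Finset.range (n+1),
                if Nat.testBit (2 ^ n + κ) m ∧ Nat.testBit i m then 1 else 0)
          = ∑ κ ∈ Finset.range (2 ^ n), q.eval (κ : ℂ) *
              (-1:ℂ) ^ (∑ m ∈ Finset.range n,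
                if Nat.testBit κ m ∧ Nat.testBit i m then 1 else 0) := by
            rw [← Finset.sum_add_distrib]
            apply Finset.sum_congr rfl
            intro κ hκ
            simp only [hsign_low κ hκ, hsign_high κ hκ, heval_high κ, hq, if_neg hb,
              eval_add, add_zero, pow_zero, mul_one]
            ring
        _ = 0 := this

open Finset in
/-- If the amplitudes `ψ_κ = ∑_{q=0}^{χ} α_q x_κ^q` (with
`x_κ = a + κ·Δx`) form a polynomial of degree at most `χ` in `κ`, then every
Walsh–Hadamard coefficient `β_i` with Hamming weight `|i|_b > χ` vanishes. -/
theorem walsh_hadamard_of_polynomial_amplitudes (n χ : ℕ) (a Δx : ℝ) (α : ℕ → ℂ)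
    (ψ : Fin (2 ^ n) → ℂ)
    (hψ : ∀ κ : Fin (2 ^ n),
      ψ κ = ∑ q ∈ Finset.range (χ + 1), α q * ((a + (κ : ℕ) * Δx : ℝ) : ℂ) ^ q)
    (i : Fin (2 ^ n))
    (hi : χ < ∑ m ∈ Finset.range n, (if Nat.testBit (i : ℕ) m then 1 else 0)) :
    ((Real.sqrt (2 ^ n) : ℂ))⁻¹ *
      ∑ κ : Fin (2 ^ n), ψ κ *
        (-1 : ℂ) ^ (∑ m ∈ Finset.range n,
          (if Nat.testBit (κ : ℕ) m ∧ Nat.testBit (i : ℕ) m then 1 else 0)) = 0 := by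
  set P : Polynomial ℂ :=
    ∑ q ∈ Finset.range (χ + 1), Polynomial.C (α q) *
      (Polynomial.C ((a : ℂ)) + Polynomial.C ((Δx : ℂ)) * Polynomial.X) ^ q with hP
  have hPdeg : P.degree ≤ (χ : WithBot ℕ) := by
    apply (Polynomial.degree_sum_le _ _).trans
    apply Finset.sup_le
    intro q hq
    have hq' : (q : WithBot ℕ) ≤ (χ : WithBot ℕ) := by
      exact_mod_cast Nat.lt_succ_iff.mp (Finset.mem_range.mp hq)
    calc (Polynomial.C (α q) *
            (Polynomial.C ((a : ℂ)) + Polynomial.C ((Δx : ℂ)) * Polynomial.X) ^ q).degree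
        ≤ 0 + (q : WithBot ℕ) * 1 := by
          apply Polynomial.degree_mul_le_of_le Polynomial.degree_C_le
          apply Polynomial.degree_pow_le_of_le
          have : Polynomial.C ((a : ℂ)) + Polynomial.C ((Δx : ℂ)) * Polynomial.X
              = Polynomial.C ((Δx : ℂ)) * Polynomial.X + Polynomial.C ((a : ℂ)) := add_comm _ _
          rw [this]
          exact Polynomial.degree_linear_le
      _ = (q : WithBot ℕ) := by simp
      _ ≤ (χ : WithBot ℕ) := hq'
  have hPeval : ∀ κ : ℕ, P.eval (κ : ℂ) =
      ∑ q ∈ Finset.range (χ + 1), α q * ((a + (κ : ℕ) * Δx : ℝ) : ℂ) ^ q := by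
    intro κ
    rw [hP, Polynomial.eval_finset_sum]
    apply Finset.sum_congr rfl
    intro q hq
    simp only [Polynomial.eval_mul, Polynomial.eval_pow, Polynomial.eval_add,
      Polynomial.eval_C, Polynomial.eval_X]
    push_cast
    ring
  have hkey := key_lemma n P i (lt_of_le_of_lt hPdeg (by exact_mod_cast hi))
  have hsum : ∑ κ : Fin (2 ^ n), ψ κ *
      (-1 : ℂ) ^ (∑ m ∈ Finset.range n,
        (if Nat.testBit (κ : ℕ) m ∧ Nat.testBit (i : ℕ) m then 1 else 0)) = 0 := by
    calc ∑ κ : Fin (2 ^ n), ψ κ *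
          (-1 : ℂ) ^ (∑ m ∈ Finset.range n,
            (if Nat.testBit (κ : ℕ) m ∧ Nat.testBit (i : ℕ) m then 1 else 0))
        = ∑ κ ∈ Finset.range (2 ^ n), P.eval (κ : ℂ) *
            (-1 : ℂ) ^ (∑ m ∈ Finset.range n,
              if Nat.testBit κ m ∧ Nat.testBit (i : ℕ) m then 1 else 0) := by
          rw [← Fin.sum_univ_eq_sum_range (fun κ => P.eval (κ : ℂ) *
            (-1 : ℂ) ^ (∑ m ∈ Finset.range n,
              if Nat.testBit κ m ∧ Nat.testBit (i : ℕ) m then 1 else 0))]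
          apply Finset.sum_congr rfl
          intro κ _
          rw [hψ κ, hPeval (κ : ℕ)]
      _ = 0 := hkey
  rw [hsum, mul_zero]
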